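/- A sequence [x_k]_0^N of R^d-valued random vectors is reciprocal if and only if it is (i) [0,N]-CM_N (i.e., CM_L) and [k1,N]-CM_{k1} (i.e., [k1,N]-CM_F) for every k1 ∈ [0,N−2]; equivalently, if and only if it is (ii) [0,N]-CM_0 (i.e., CM_F) and [0,k2]-CM_{k2} (i.e., [0,k2]-CM_L) for every k2 ∈ [2,N]. -/

import Mathlib

open MeasureTheory ProbabilityTheory Matrix

noncomputable section

namespace CMSeq

variable {Ω : Type} [MeasurableSpace Ω]

/-- The covariance matrix `E[(X - E X)(Y - E Y)']` of two random vectors. -/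
def cov {ι κ : Type} [Fintype ι] [Fintype κ] (μ : Measure Ω)
    (X : Ω → ι → ℝ) (Y : Ω → κ → ℝ) : Matrix ι κ ℝ :=
  Matrix.of fun a b =>
    ∫ ω, (X ω a - ∫ ω', X ω' a ∂μ) * (Y ω b - ∫ ω', Y ω' b ∂μ) ∂μ

/-- The family `x 0, …, x (n-1)` of `ℝ^d`-valued random vectors is jointly Gaussian
(possibly degenerate): every linear combination of the entries has a Gaussian
distribution on `ℝ`. -/
def IsGaussianFam (μ : Measure Ω) (n d : ℕ) (x : ℕ → Ω → (Fin d → ℝ)) : Prop :=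
  ∀ a : Fin n → Fin d → ℝ, ∃ m : ℝ, ∃ v : NNReal,
    μ.map (fun ω => ∑ k : Fin n, ∑ i : Fin d, a k i * x (k : ℕ) ω i) = gaussianReal m v

/-- Jointly zero-mean Gaussian: every linear combination of the entries has a centered
Gaussian distribution on `ℝ`. -/
def IsZeroMeanGaussianFam (μ : Measure Ω) (n d : ℕ) (x : ℕ → Ω → (Fin d → ℝ)) : Prop :=
  ∀ a : Fin n → Fin d → ℝ, ∃ v : NNReal,
    μ.map (fun ω => ∑ k : Fin n, ∑ i : Fin d, a k i * x (k : ℕ) ω i) = gaussianReal 0 v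

/-- `X` is a Moore-Penrose inverse of `A`. -/
def IsMoorePenrose {m n : Type} [Fintype m] [Fintype n]
    (A : Matrix m n ℝ) (X : Matrix n m ℝ) : Prop :=
  A * X * A = A ∧ X * A * X = X ∧ (A * X)ᵀ = A * X ∧ (X * A)ᵀ = X * A

variable [StandardBorelSpace Ω]

/-- The sequence `(y k)` for `k ∈ [a, b]` is Markov: for `a ≤ j < k ≤ b`, `y k` is
conditionally independent of `(y i : a ≤ i < j)` given the σ-algebra generated by `y j`. -/
def IsMarkovOn {V : Type} [MeasurableSpace V] (μ : Measure Ω) [IsFiniteMeasure μ]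
    (y : ℕ → Ω → V) (hy : ∀ k, Measurable (y k)) (a b : ℕ) : Prop :=
  ∀ j k : ℕ, a ≤ j → j < k → k ≤ b →
    CondIndepFun (MeasurableSpace.comap (y j) inferInstance)
      (measurable_iff_comap_le.mp (hy j))
      (y k) (fun ω (i : Set.Ico a j) => y (i : ℕ) ω) μ

/-- `[x_k]` is `[k1,k2]`-CM_c : for `k1 ≤ j < k ≤ k2`, `x k` is conditionally independent
of `(x_{k1}, …, x_{j-1})` given the σ-algebra generated by `(x j, x c)`. -/
def IsCMOn {d : ℕ} (μ : Measure Ω) [IsFiniteMeasure μ] (x : ℕ → Ω → (Fin d → ℝ))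
    (hx : ∀ k, Measurable (x k)) (k1 k2 c : ℕ) : Prop :=
  ∀ j k : ℕ, k1 ≤ j → j < k → k ≤ k2 →
    CondIndepFun (MeasurableSpace.comap (fun ω => (x j ω, x c ω)) inferInstance)
      (measurable_iff_comap_le.mp ((hx j).prodMk (hx c)))
      (x k) (fun ω (i : Set.Ico k1 j) => x (i : ℕ) ω) μ

/-- `[x_k]_0^N` is reciprocal: for `0 ≤ j < k < l ≤ N`, `x k` is conditionally independent
of `(x_0, …, x_{j-1}, x_{l+1}, …, x_N)` given the σ-algebra generated by `(x j, x l)`. -/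
def IsReciprocal {d : ℕ} (μ : Measure Ω) [IsFiniteMeasure μ] (N : ℕ)
    (x : ℕ → Ω → (Fin d → ℝ)) (hx : ∀ k, Measurable (x k)) : Prop :=
  ∀ j k l : ℕ, j < k → k < l → l ≤ N →
    CondIndepFun (MeasurableSpace.comap (fun ω => (x j ω, x l ω)) inferInstance)
      (measurable_iff_comap_le.mp ((hx j).prodMk (hx l)))
      (x k) (fun ω (i : {i : ℕ // i < j ∨ (l < i ∧ i ≤ N)}) => x (i : ℕ) ω) μ

/-- `[e_k]_0^{n-1}` is a zero-mean white Gaussian sequence: jointly Gaussian, zero-mean,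
and mutually independent. -/
def IsWhiteGaussian (μ : Measure Ω) (n d : ℕ) (e : ℕ → Ω → (Fin d → ℝ)) : Prop :=
  IsZeroMeanGaussianFam μ n d e ∧
    iIndepFun (fun k : Fin n => e (k : ℕ)) μ

/-- `[x_k]_0^N` obeys the `CM_L` dynamic model with parameters `F k = G_{k,k-1}`
(for `k ∈ [1,N-1]`), `GN k = G_{k,N}` (for `k ∈ [0,N-1]`) and zero-mean white Gaussian
noise `[e_k]_0^N`:  `x_N = e_N`, `x_0 = G_{0,N} x_N + e_0` and
`x_k = G_{k,k-1} x_{k-1} + G_{k,N} x_N + e_k` for `k ∈ [1,N-1]`, all almost surely. -/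
def ObeysCMLModel (μ : Measure Ω) (N d : ℕ) (x : ℕ → Ω → (Fin d → ℝ))
    (F GN : ℕ → Matrix (Fin d) (Fin d) ℝ) (e : ℕ → Ω → (Fin d → ℝ)) : Prop :=
  (∀ k, Measurable (e k)) ∧ IsWhiteGaussian μ (N + 1) d e ∧
    (∀ᵐ ω ∂μ, x N ω = e N ω) ∧
    (∀ᵐ ω ∂μ, x 0 ω = (GN 0).mulVec (x N ω) + e 0 ω) ∧
    (∀ k : ℕ, 1 ≤ k → k ≤ N - 1 →
      ∀ᵐ ω ∂μ, x k ω = (F k).mulVec (x (k - 1) ω) + (GN k).mulVec (x N ω) + e k ω)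

/-- `[x_k]_0^N` obeys the `CM_F` dynamic model with parameters `F k = G_{k,k-1}` and
`G0 k = G_{k,0}` (for `k ∈ [1,N]`) and zero-mean white Gaussian noise `[e_k]_0^N`:
`x_0 = e_0` and `x_k = G_{k,k-1} x_{k-1} + G_{k,0} x_0 + e_k` for `k ∈ [1,N]`. -/
def ObeysCMFModel (μ : Measure Ω) (N d : ℕ) (x : ℕ → Ω → (Fin d → ℝ))
    (F G0 : ℕ → Matrix (Fin d) (Fin d) ℝ) (e : ℕ → Ω → (Fin d → ℝ)) : Prop :=
  (∀ k, Measurable (e k)) ∧ IsWhiteGaussian μ (N + 1) d e ∧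
    (∀ᵐ ω ∂μ, x 0 ω = e 0 ω) ∧
    (∀ k : ℕ, 1 ≤ k → k ≤ N →
      ∀ᵐ ω ∂μ, x k ω = (F k).mulVec (x (k - 1) ω) + (G0 k).mulVec (x 0 ω) + e k ω)

/-- The `(N+1)d × (N+1)d` block matrix `𝓖` of the `CM_L` model: identity diagonal blocks,
block `-(F k)` in block position `(k, k-1)` for `k ∈ [1, N-1]`, block `-(GN k)` in block
position `(k, N)` for `k ∈ [0, N-1]`, and zero blocks elsewhere. -/
def scriptG (N d : ℕ) (F GN : ℕ → Matrix (Fin d) (Fin d) ℝ) :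
    Matrix (Fin (N + 1) × Fin d) (Fin (N + 1) × Fin d) ℝ :=
  Matrix.of fun p q =>
    (if p.1 = q.1 then (1 : Matrix (Fin d) (Fin d) ℝ) p.2 q.2 else 0)
    - (if (p.1 : ℕ) = (q.1 : ℕ) + 1 ∧ 1 ≤ (p.1 : ℕ) ∧ (p.1 : ℕ) ≤ N - 1
        then (F (p.1 : ℕ)) p.2 q.2 else 0)
    - (if (q.1 : ℕ) = N ∧ (p.1 : ℕ) ≤ N - 1 then (GN (p.1 : ℕ)) p.2 q.2 else 0)

/-- The `(N+1)d × (N+1)d` block-diagonal matrix `G = diag(G_0, …, G_N)` with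
`G_k = Cov(e_k)`. -/
def blockDiagCov (μ : Measure Ω) (N d : ℕ) (e : ℕ → Ω → (Fin d → ℝ)) :
    Matrix (Fin (N + 1) × Fin d) (Fin (N + 1) × Fin d) ℝ :=
  Matrix.of fun p q =>
    if p.1 = q.1 then cov μ (e (p.1 : ℕ)) (e (q.1 : ℕ)) p.2 q.2 else 0

/-- The covariance matrix `P = 𝓖⁻¹ G (𝓖')⁻¹` determined by the parameters of a `CM_L`
model. -/
def bigP (μ : Measure Ω) (N d : ℕ) (F GN : ℕ → Matrix (Fin d) (Fin d) ℝ)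
    (e : ℕ → Ω → (Fin d → ℝ)) :
    Matrix (Fin (N + 1) × Fin d) (Fin (N + 1) × Fin d) ℝ :=
  (scriptG N d F GN)⁻¹ * blockDiagCov μ N d e * ((scriptG N d F GN)ᵀ)⁻¹

/-- The `(i,j)` `d × d` block of an `(N+1)d × (N+1)d` matrix. -/
def blk {N d : ℕ} (P : Matrix (Fin (N + 1) × Fin d) (Fin (N + 1) × Fin d) ℝ)
    (i j : Fin (N + 1)) : Matrix (Fin d) (Fin d) ℝ :=
  Matrix.of fun a b => P (i, a) (j, b)

/-- The reciprocal/CM covariance identity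
`C_{k,i} = [C_{k,j} C_{k,l}] ([[C_j, C_{j,l}],[C_{l,j}, C_l]])⁺ [C_{j,i}; C_{l,i}]`,
phrased for every Moore-Penrose inverse of the middle matrix. -/
def CovCMIdentity {d : ℕ} (C : ℕ → ℕ → Matrix (Fin d) (Fin d) ℝ) (i j k l : ℕ) : Prop :=
  ∀ M : Matrix (Fin d ⊕ Fin d) (Fin d ⊕ Fin d) ℝ,
    IsMoorePenrose (Matrix.fromBlocks (C j j) (C j l) (C l j) (C l l)) M →
      C k i = Matrix.fromCols (C k j) (C k l) * M * Matrix.fromRows (C j i) (C l i)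
/-- The CM/reciprocal identity for the `d × d` blocks of a big block matrix `P`, phrased
for every Moore-Penrose inverse of the middle matrix. -/
def BlkCMIdentity {N d : ℕ} (P : Matrix (Fin (N + 1) × Fin d) (Fin (N + 1) × Fin d) ℝ)
    (i j k l : Fin (N + 1)) : Prop :=
  ∀ M : Matrix (Fin d ⊕ Fin d) (Fin d ⊕ Fin d) ℝ,
    IsMoorePenrose (Matrix.fromBlocks (blk P j j) (blk P j l) (blk P l j) (blk P l l)) M →
      blk P k i =
        Matrix.fromCols (blk P k j) (blk P k l) * M *
          Matrix.fromRows (blk P j i) (blk P l i)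

end CMSeq

open MeasureTheory ProbabilityTheory

set_option linter.unusedSectionVars false

section CMToolsSec

namespace CMTools

set_option linter.unusedSectionVars false

variable {Ω : Type} {m' m₁ m₂ a b b₁ b₂ Z : MeasurableSpace Ω}
  [mΩ : MeasurableSpace Ω] [StandardBorelSpace Ω]
  {μ : MeasureTheory.Measure Ω} [IsFiniteMeasure μ]

noncomputable def indR (t : Set Ω) : Ω → ℝ := t.indicator (fun _ => (1:ℝ))

lemma indR_integrable {t : Set Ω} (ht : MeasurableSet[mΩ] t) :
    Integrable (indR t) μ :=
  (integrable_const (1:ℝ)).indicator ht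

/-- KEY characterization: conditional independence via conditional expectations. -/
lemma condIndep_iff_condexp_sup (hm' : m' ≤ mΩ) (hm₁ : m₁ ≤ mΩ) (hm₂ : m₂ ≤ mΩ) :
    CondIndep m' m₁ m₂ hm' μ ↔
      ∀ t, MeasurableSet[m₁] t →
        μ[indR t | m' ⊔ m₂] =ᵐ[μ] μ[indR t | m'] := by
  have hs' : m' ⊔ m₂ ≤ mΩ := sup_le hm' hm₂
  rw [condIndep_iff m' m₁ m₂ hm' hm₁ hm₂ μ]
  constructor
  · -- hard direction
    intro hInd t1 ht1
    have ht1' : MeasurableSet[mΩ] t1 := hm₁ _ ht1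
    have hf : Integrable (indR t1) μ := indR_integrable ht1'
    -- the π-system generating m' ⊔ m₂
    set piC : Set (Set Ω) :=
      {s | ∃ s1, MeasurableSet[m'] s1 ∧ ∃ s2, MeasurableSet[m₂] s2 ∧ s = s1 ∩ s2} with hpiC
    have h_eq : m' ⊔ m₂ = MeasurableSpace.generateFrom piC := by
      refine le_antisymm (sup_le ?_ ?_) (MeasurableSpace.generateFrom_le ?_)
      · intro s hs
        exact MeasurableSpace.measurableSet_generateFrom
          ⟨s, hs, Set.univ, MeasurableSet.univ, (s.inter_univ).symm⟩
      · intro s hs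
        exact MeasurableSpace.measurableSet_generateFrom
          ⟨Set.univ, MeasurableSet.univ, s, hs, (s.univ_inter).symm⟩
      · rintro t ⟨s1, hs1, s2, hs2, rfl⟩
        exact ((le_sup_left : m' ≤ m' ⊔ m₂) _ hs1).inter
          ((le_sup_right : m₂ ≤ m' ⊔ m₂) _ hs2)
    have h_pi : IsPiSystem piC := by
      rintro t ⟨a, ha, b, hb, rfl⟩ u ⟨c, hc, d, hd, rfl⟩ -
      exact ⟨a ∩ c, ha.inter hc, b ∩ d, hb.inter hd, Set.inter_inter_inter_comm a b c d⟩
    have h_main : ∀ s, MeasurableSet[m' ⊔ m₂] s →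
        ∫ x in s, (μ[indR t1|m']) x ∂μ = ∫ x in s, indR t1 x ∂μ := by
      have h_ind := @MeasurableSpace.induction_on_inter Ω (m' ⊔ m₂)
        (fun s _ => ∫ x in s, (μ[indR t1|m']) x ∂μ = ∫ x in s, indR t1 x ∂μ)
        piC h_eq h_pi ?_ ?_ ?_ ?_
      · exact fun s hs => h_ind s hs
      · simp
      · -- basic sets s1 ∩ s2
        rintro t ⟨s1, hs1, s2, hs2, rfl⟩
        have hs1' : MeasurableSet[mΩ] s1 := hm' _ hs1
        have hs2' : MeasurableSet[mΩ] s2 := hm₂ _ hs2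
        have e0 : s2.indicator (μ[indR t1|m']) = (μ[indR t1|m']) * indR s2 := by
          funext y
          by_cases hy : y ∈ s2 <;> simp [indR, Set.indicator, hy]
        calc ∫ x in s1 ∩ s2, (μ[indR t1|m']) x ∂μ
            = ∫ x in s1, s2.indicator (μ[indR t1|m']) x ∂μ := by
              rw [setIntegral_indicator hs2']
          _ = ∫ x in s1, ((μ[indR t1|m']) * indR s2) x ∂μ := by rw [e0]
          _ = ∫ x in s1, (μ[(μ[indR t1|m']) * indR s2|m']) x ∂μ := by
              refine (setIntegral_condExp hm' ?_ hs1).symm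
              have : (μ[indR t1|m']) * indR s2 = s2.indicator (μ[indR t1|m']) := e0.symm
              rw [this]
              exact (integrable_condExp.integrableOn).integrable_indicator hs2'
          _ = ∫ x in s1, ((μ[indR t1|m']) * (μ[indR s2|m'])) x ∂μ := by
              refine setIntegral_congr_ae hs1' ?_
              filter_upwards [condExp_mul_of_stronglyMeasurable_left
                (stronglyMeasurable_condExp)
                (by rw [show (μ[indR t1|m']) * indR s2 = s2.indicator (μ[indR t1|m']) from e0.symm]
                    exact (integrable_condExp.integrableOn).integrable_indicator hs2')
                (indR_integrable hs2')] with y hy _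
              exact hy
          _ = ∫ x in s1, (μ[indR (t1 ∩ s2)|m']) x ∂μ := by
              refine setIntegral_congr_ae hs1' ?_
              filter_upwards [hInd t1 s2 ht1 hs2] with y hy _
              exact hy.symm
          _ = ∫ x in s1, indR (t1 ∩ s2) x ∂μ :=
              setIntegral_condExp hm' (indR_integrable (ht1'.inter hs2')) hs1
          _ = ∫ x in s1 ∩ s2, indR t1 x ∂μ := by
              rw [indR, indR, setIntegral_indicator (ht1'.inter hs2'),
                setIntegral_indicator ht1']
              congr 1
              have : s1 ∩ (t1 ∩ s2) = s1 ∩ s2 ∩ t1 := by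
                ext y; simp only [Set.mem_inter_iff]; tauto
              rw [this]
      · -- complement
        intro t htm hC
        have ht' : MeasurableSet[mΩ] t := hs' _ htm
        have h1 := integral_add_compl ht' (integrable_condExp :
          Integrable (μ[indR t1|m']) μ)
        have h2 := integral_add_compl ht' hf
        have h3 : ∫ x, (μ[indR t1|m']) x ∂μ = ∫ x, indR t1 x ∂μ :=
          integral_condExp hm'
        linarith
      · -- disjoint union
        intro f hdisj hfm hC
        have hfm' : ∀ i, MeasurableSet[mΩ] (f i) := fun i => hs' _ (hfm i)
        rw [integral_iUnion hfm' hdisj (integrable_condExp.integrableOn),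
          integral_iUnion hfm' hdisj (hf.integrableOn)]
        exact tsum_congr hC
    refine (ae_eq_condExp_of_forall_setIntegral_eq hs' hf
      (fun s _ _ => integrable_condExp.integrableOn)
      (fun s hs _ => h_main s hs)
      ((stronglyMeasurable_condExp.mono (le_sup_left : m' ≤ m' ⊔ m₂)).aestronglyMeasurable)).symm
  · -- easy direction
    intro h t1 t2 ht1 ht2
    have ht1' : MeasurableSet[mΩ] t1 := hm₁ _ ht1
    have ht2' : MeasurableSet[mΩ] t2 := hm₂ _ ht2
    have hI1 : Integrable (indR t1) μ := indR_integrable ht1'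
    have e0 : indR (t1 ∩ t2) = indR t2 * indR t1 := by
      rw [indR, indR, indR, Set.inter_comm]
      exact Set.inter_indicator_one
    have sm2 : StronglyMeasurable[m' ⊔ m₂] (indR t2) :=
      (stronglyMeasurable_const.indicator ht2).mono (le_sup_right : m₂ ≤ m' ⊔ m₂)
    have hI12 : Integrable (indR t2 * indR t1) μ := by
      rw [← e0]; exact indR_integrable (ht1'.inter ht2')
    calc (μ⟦t1 ∩ t2|m'⟧ : Ω → ℝ)
        =ᵐ[μ] μ[(μ[indR (t1 ∩ t2)|m' ⊔ m₂])|m'] :=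
          (condExp_condExp_of_le (le_sup_left : m' ≤ m' ⊔ m₂) hs').symm
      _ =ᵐ[μ] μ[indR t2 * (μ[indR t1|m' ⊔ m₂])|m'] := by
          refine condExp_congr_ae ?_
          rw [e0]
          exact condExp_mul_of_stronglyMeasurable_left sm2 hI12 hI1
      _ =ᵐ[μ] μ[indR t2 * (μ[indR t1|m'])|m'] := by
          refine condExp_congr_ae ?_
          exact Filter.EventuallyEq.mul Filter.EventuallyEq.rfl (h t1 ht1)
      _ =ᵐ[μ] (μ[indR t1|m']) * μ[indR t2|m'] := by
          have : indR t2 * (μ[indR t1|m']) = (μ[indR t1|m']) * indR t2 := mul_comm _ _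
          rw [this]
          refine condExp_mul_of_stronglyMeasurable_left stronglyMeasurable_condExp ?_
            (indR_integrable ht2')
          have hb : Integrable (indR t2 * (μ[indR t1|m'])) μ := by
            refine Integrable.bdd_mul (c := 1) integrable_condExp
              ((stronglyMeasurable_const.indicator (hm₂ _ ht2)).aestronglyMeasurable) ?_
            filter_upwards with y
            by_cases hy : y ∈ t2 <;> simp [indR, Set.indicator, hy]
          rwa [mul_comm] at hb
      _ =ᵐ[μ] (μ⟦t1|m'⟧ : Ω → ℝ) * μ⟦t2|m'⟧ := Filter.EventuallyEq.rfl


lemma condIndep_congr' {h1 : m' ≤ mΩ} {h2 : b ≤ mΩ}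
    (e' : m' = b) (e1 : m₁ = b₁) (e2 : m₂ = b₂) :
    CondIndep m' m₁ m₂ h1 μ ↔ CondIndep b b₁ b₂ h2 μ := by
  subst e' e1 e2; rfl

lemma CondIndep.weakUnion (hm' : m' ≤ mΩ) (ha : a ≤ mΩ) (hb₁ : b₁ ≤ mΩ) (hb₂ : b₂ ≤ mΩ)
    (h : CondIndep m' a (b₁ ⊔ b₂) hm' μ) :
    CondIndep (m' ⊔ b₂) a b₁ (sup_le hm' hb₂) μ := by
  rw [condIndep_iff_condexp_sup hm' ha (sup_le hb₁ hb₂)] at h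
  rw [condIndep_iff_condexp_sup (sup_le hm' hb₂) ha hb₁]
  intro t ht
  have e : (m' ⊔ b₂) ⊔ b₁ = m' ⊔ (b₁ ⊔ b₂) := by
    rw [sup_assoc, sup_comm b₂ b₁]
  have h1 : μ[indR t | (m' ⊔ b₂) ⊔ b₁] =ᵐ[μ] μ[indR t | m'] := by
    rw [e]; exact h t ht
  have h2 : μ[indR t | m' ⊔ b₂] =ᵐ[μ] μ[indR t | m'] := by
    have e1 : μ[μ[indR t | m' ⊔ (b₁ ⊔ b₂)] | m' ⊔ b₂] =ᵐ[μ] μ[indR t | m' ⊔ b₂] :=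
      condExp_condExp_of_le (sup_le le_sup_left (le_sup_right.trans le_sup_right))
        (sup_le hm' (sup_le hb₁ hb₂))
    have e2 : μ[μ[indR t | m' ⊔ (b₁ ⊔ b₂)] | m' ⊔ b₂] =ᵐ[μ] μ[μ[indR t | m'] | m' ⊔ b₂] :=
      condExp_congr_ae (h t ht)
    have e3 : μ[μ[indR t | m'] | m' ⊔ b₂] = μ[indR t | m'] :=
      condExp_of_stronglyMeasurable (sup_le hm' hb₂)
        (stronglyMeasurable_condExp.mono le_sup_left) integrable_condExp
    calc μ[indR t | m' ⊔ b₂] =ᵐ[μ] μ[μ[indR t | m' ⊔ (b₁ ⊔ b₂)] | m' ⊔ b₂] := e1.symm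
      _ =ᵐ[μ] μ[μ[indR t | m'] | m' ⊔ b₂] := e2
      _ =ᵐ[μ] μ[indR t | m'] := by rw [e3]
  exact h1.trans h2.symm

lemma CondIndep.contraction (hm' : m' ≤ mΩ) (ha : a ≤ mΩ) (hb₁ : b₁ ≤ mΩ) (hb₂ : b₂ ≤ mΩ)
    (h1 : CondIndep m' a b₁ hm' μ)
    (h2 : CondIndep (m' ⊔ b₁) a b₂ (sup_le hm' hb₁) μ) :
    CondIndep m' a (b₁ ⊔ b₂) hm' μ := by
  rw [condIndep_iff_condexp_sup hm' ha hb₁] at h1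
  rw [condIndep_iff_condexp_sup (sup_le hm' hb₁) ha hb₂] at h2
  rw [condIndep_iff_condexp_sup hm' ha (sup_le hb₁ hb₂)]
  intro t ht
  have e : m' ⊔ (b₁ ⊔ b₂) = (m' ⊔ b₁) ⊔ b₂ := (sup_assoc m' b₁ b₂).symm
  calc μ[indR t | m' ⊔ (b₁ ⊔ b₂)] = μ[indR t | (m' ⊔ b₁) ⊔ b₂] := by rw [e]
    _ =ᵐ[μ] μ[indR t | m' ⊔ b₁] := h2 t ht
    _ =ᵐ[μ] μ[indR t | m'] := h1 t ht

lemma condIndep_of_le_left (hm' : m' ≤ mΩ) (h₁ : m₁ ≤ m') (hm₂ : m₂ ≤ mΩ) :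
    CondIndep m' m₁ m₂ hm' μ := by
  rw [condIndep_iff_condexp_sup hm' (h₁.trans hm') hm₂]
  intro t ht
  have hti : Integrable (indR t) μ := indR_integrable (hm' _ (h₁ _ ht))
  have sm : StronglyMeasurable[m'] (indR t) :=
    (stronglyMeasurable_const.indicator ht).mono h₁
  rw [condExp_of_stronglyMeasurable (sup_le hm' hm₂) (sm.mono le_sup_left) hti,
    condExp_of_stronglyMeasurable hm' sm hti]

lemma CondIndep.absorb (hm' : m' ≤ mΩ) (hm₁ : m₁ ≤ mΩ) (hb : b ≤ mΩ) (hb₂ : b₂ ≤ m')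
    (h : CondIndep m' m₁ b hm' μ) :
    CondIndep m' m₁ (b₂ ⊔ b) hm' μ := by
  rw [condIndep_iff_condexp_sup hm' hm₁ hb] at h
  rw [condIndep_iff_condexp_sup hm' hm₁ (sup_le (hb₂.trans hm') hb)]
  have e : m' ⊔ (b₂ ⊔ b) = m' ⊔ b := by
    rw [← sup_assoc, sup_eq_left.mpr hb₂]
  intro t ht
  rw [e]
  exact h t ht


/-! σ-algebras generated by families indexed by sets of naturals -/

def MSup (m : ℕ → MeasurableSpace Ω) (S : Set ℕ) : MeasurableSpace Ω := ⨆ i ∈ S, m i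

lemma MSup_le {m : ℕ → MeasurableSpace Ω} (hm : ∀ i, m i ≤ mΩ) {S : Set ℕ} :
    MSup m S ≤ mΩ := iSup₂_le fun i _ => hm i

lemma MSup_empty {m : ℕ → MeasurableSpace Ω} : MSup m ∅ = ⊥ := by simp [MSup]

lemma MSup_insert {m : ℕ → MeasurableSpace Ω} {i : ℕ} {S : Set ℕ} :
    MSup m (insert i S) = m i ⊔ MSup m S := iSup_insert

lemma MSup_union {m : ℕ → MeasurableSpace Ω} {S T : Set ℕ} :
    MSup m (S ∪ T) = MSup m S ⊔ MSup m T := iSup_union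

lemma MSup_mono {m : ℕ → MeasurableSpace Ω} {S T : Set ℕ} (h : S ⊆ T) :
    MSup m S ≤ MSup m T := biSup_mono h

lemma le_MSup (m : ℕ → MeasurableSpace Ω) {S : Set ℕ} {i : ℕ} (hi : i ∈ S) :
    m i ≤ MSup m S := le_iSup₂ (f := fun i _ => m i) i hi

lemma msup_shift {m : ℕ → MeasurableSpace Ω} {j n : ℕ} (h : j ≤ n) :
    m n ⊔ MSup m (Set.Ico j n) = m j ⊔ MSup m (Set.Ioc j n) := by
  rw [← MSup_insert, ← MSup_insert]
  congr 1
  ext i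
  simp only [Set.mem_insert_iff, Set.mem_Ico, Set.mem_Ioc]
  omega

lemma sup_shuffle {Z A B p q : MeasurableSpace Ω} (h : p ⊔ A = q ⊔ B) :
    (p ⊔ Z) ⊔ A = (q ⊔ Z) ⊔ B := by
  rw [sup_right_comm, h, sup_right_comm]

lemma condIndep_transport {n' n₁ n₂ : MeasurableSpace Ω} {h1 : m' ≤ mΩ}
    (h : CondIndep m' m₁ m₂ h1 μ)
    (e' : m' = n') (e1 : m₁ = n₁) (e2 : m₂ = n₂) (h2 : n' ≤ mΩ) :
    CondIndep n' n₁ n₂ h2 μ := by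
  subst e' e1 e2; exact h

/-- From a pointwise Markov-type property (with a fixed extra σ-algebra `Z` in the
conditioning) to the joint block independence of past and future. -/
lemma markov_joint {m : ℕ → MeasurableSpace Ω} (hm : ∀ i, m i ≤ mΩ)
    (hZ : Z ≤ mΩ) (lo hi : ℕ)
    (hyp : ∀ j k : ℕ, lo ≤ j → j < k → k ≤ hi →
      CondIndep (m j ⊔ Z) (m k) (MSup m (Set.Ico lo j)) (sup_le (hm j) hZ) μ) :
    ∀ j n : ℕ, lo ≤ j → j ≤ n → n ≤ hi →
      CondIndep (m j ⊔ Z) (MSup m (Set.Ico lo j)) (MSup m (Set.Ioc j n))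
        (sup_le (hm j) hZ) μ := by
  intro j n haj hjn
  induction n, hjn using Nat.le_induction with
  | base =>
      intro _
      have e : MSup m (Set.Ioc j j) = ⊥ := by rw [Set.Ioc_self, MSup_empty]
      rw [e]
      exact condIndep_bot_right _
  | succ n hjn ih =>
      intro hnb
      have ihn := ih (le_of_lt (Nat.lt_of_succ_le hnb))
      have h1 := hyp n (n + 1) (haj.trans hjn) (Nat.lt_succ_self n) hnb
      have e1 : MSup m (Set.Ico lo n) = MSup m (Set.Ico lo j) ⊔ MSup m (Set.Ico j n) := by
        rw [← MSup_union, Set.Ico_union_Ico_eq_Ico haj hjn]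
      rw [e1] at h1
      have h2 := CondIndep.weakUnion (sup_le (hm n) hZ) (hm (n + 1))
        (MSup_le hm) (MSup_le hm) h1
      have e2 : (m n ⊔ Z) ⊔ MSup m (Set.Ico j n) = (m j ⊔ Z) ⊔ MSup m (Set.Ioc j n) :=
        sup_shuffle (msup_shift hjn)
      have h3 := condIndep_transport h2 e2 rfl rfl (sup_le (sup_le (hm j) hZ) (MSup_le hm))
      have h4 := CondIndep.contraction (sup_le (hm j) hZ) (MSup_le hm)
        (MSup_le hm) (hm (n + 1)) ihn h3.symm
      have e3 : MSup m (Set.Ioc j n) ⊔ m (n + 1) = MSup m (Set.Ioc j (n + 1)) := by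
        rw [sup_comm, ← MSup_insert]
        congr 1
        ext i
        simp only [Set.mem_insert_iff, Set.mem_Ioc]
        omega
      exact condIndep_transport h4 rfl rfl e3 _

/-- From the reciprocal property to the joint independence of an inside block from the
outside, given the two boundary points. -/
lemma inside_joint {m : ℕ → MeasurableSpace Ω} (hm : ∀ i, m i ≤ mΩ) (N : ℕ)
    (hyp : ∀ j k l : ℕ, j < k → k < l → l ≤ N →
      CondIndep (m j ⊔ m l) (m k) (MSup m {i | i < j ∨ (l < i ∧ i ≤ N)})
        (sup_le (hm j) (hm l)) μ) :
    ∀ p q n : ℕ, p ≤ n → n < q → q ≤ N →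
      CondIndep (m p ⊔ m q) (MSup m ({i | i < p} ∪ {i | q < i ∧ i ≤ N}))
        (MSup m (Set.Ioc p n)) (sup_le (hm p) (hm q)) μ := by
  intro p q n hpn
  induction n, hpn using Nat.le_induction with
  | base =>
      intro _ _
      have e : MSup m (Set.Ioc p p) = ⊥ := by rw [Set.Ioc_self, MSup_empty]
      rw [e]
      exact condIndep_bot_right _
  | succ n hpn ih =>
      intro hsq hqN
      have ihn := ih (Nat.lt_of_succ_lt hsq) hqN
      have h1 := hyp n (n + 1) q (Nat.lt_succ_self n) hsq hqN
      have e1 : MSup m {i | i < n ∨ (q < i ∧ i ≤ N)} =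
          MSup m (({i | i < p} ∪ {i | q < i ∧ i ≤ N}) ∪ Set.Ico p n) := by
        congr 1
        ext i
        simp only [Set.mem_setOf_eq, Set.mem_union, Set.mem_Ico]
        omega
      rw [e1, MSup_union] at h1
      have h2 := CondIndep.weakUnion (sup_le (hm n) (hm q)) (hm (n + 1))
        (MSup_le hm) (MSup_le hm) h1
      have e2 : (m n ⊔ m q) ⊔ MSup m (Set.Ico p n) =
          (m p ⊔ m q) ⊔ MSup m (Set.Ioc p n) :=
        sup_shuffle (msup_shift hpn)
      have h3 := condIndep_transport h2 e2 rfl rfl (sup_le (sup_le (hm p) (hm q)) (MSup_le hm))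
      have h4 := CondIndep.contraction (sup_le (hm p) (hm q)) (MSup_le hm)
        (MSup_le hm) (hm (n + 1)) ihn h3.symm
      have e3 : MSup m (Set.Ioc p n) ⊔ m (n + 1) = MSup m (Set.Ioc p (n + 1)) := by
        rw [sup_comm, ← MSup_insert]
        congr 1
        ext i
        simp only [Set.mem_insert_iff, Set.mem_Ioc]
        omega
      exact condIndep_transport h4 rfl rfl e3 _


lemma comap_prodmk {α β : Type*} [mα : MeasurableSpace α] [mβ : MeasurableSpace β]
    (f : Ω → α) (g : Ω → β) :
    MeasurableSpace.comap (fun ω => (f ω, g ω)) inferInstance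
      = MeasurableSpace.comap f mα ⊔ MeasurableSpace.comap g mβ := by
  have e : (inferInstance : MeasurableSpace (α × β))
      = mα.comap Prod.fst ⊔ mβ.comap Prod.snd := rfl
  rw [e, MeasurableSpace.comap_sup, MeasurableSpace.comap_comp, MeasurableSpace.comap_comp]
  rfl

lemma comap_pi_family {d : ℕ} (x : ℕ → Ω → (Fin d → ℝ)) (S : Set ℕ) :
    MeasurableSpace.comap (fun ω (i : S) => x (i : ℕ) ω) MeasurableSpace.pi
      = MSup (fun i => MeasurableSpace.comap (x i) inferInstance) S := by
  rw [MeasurableSpace.pi, MeasurableSpace.comap_iSup]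
  simp_rw [MeasurableSpace.comap_comp]
  rw [MSup, iSup_subtype']
  rfl

/-- Reciprocal (at the σ-algebra level) implies the `[k1,N]`-CM_F property. -/
lemma reciprocal_to_CMF {m : ℕ → MeasurableSpace Ω} (hm : ∀ i, m i ≤ mΩ) (N : ℕ)
    (R : ∀ j k l : ℕ, j < k → k < l → l ≤ N →
      CondIndep (m j ⊔ m l) (m k) (MSup m {i | i < j ∨ (l < i ∧ i ≤ N)})
        (sup_le (hm j) (hm l)) μ) :
    ∀ k1 j k : ℕ, k1 ≤ j → j < k → k ≤ N →
      CondIndep (m j ⊔ m k1) (m k) (MSup m (Set.Ico k1 j))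
        (sup_le (hm j) (hm k1)) μ := by
  intro k1 j k hk1j hjk hkN
  rcases eq_or_lt_of_le hk1j with rfl | hlt
  · have e : MSup m (Set.Ico k1 k1) = ⊥ := by rw [Set.Ico_self, MSup_empty]
    rw [e]
    exact condIndep_bot_right _
  · have hjN : j ≤ N := le_of_lt (lt_of_lt_of_le hjk hkN)
    have ij := inside_joint hm N R k1 j (j - 1) (by omega) (by omega) hjN
    have hkmem : k ∈ ({i | i < k1} ∪ {i | j < i ∧ i ≤ N} : Set ℕ) := Or.inr ⟨hjk, hkN⟩
    have h1 : CondIndep (m k1 ⊔ m j) (m k) (MSup m (Set.Ioc k1 (j - 1)))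
        (sup_le (hm k1) (hm j)) μ :=
      condIndep_of_condIndep_of_le_left ij (le_MSup m hkmem)
    have h2 := CondIndep.absorb (sup_le (hm k1) (hm j)) (hm k) (MSup_le hm)
      (le_sup_left : m k1 ≤ m k1 ⊔ m j) h1
    have e2 : m k1 ⊔ MSup m (Set.Ioc k1 (j - 1)) = MSup m (Set.Ico k1 j) := by
      rw [← MSup_insert]
      congr 1
      ext i
      simp only [Set.mem_insert_iff, Set.mem_Ioc, Set.mem_Ico]
      omega
    exact condIndep_transport h2 (sup_comm _ _) rfl e2 _

end CMTools

end CMToolsSec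


open CMSeq CMTools in
theorem statement2 {Ω : Type} [MeasurableSpace Ω] [StandardBorelSpace Ω]
    (μ : MeasureTheory.Measure Ω) [MeasureTheory.IsProbabilityMeasure μ]
    (N d : ℕ) (hN : 2 ≤ N) (hd : 1 ≤ d)
    (x : ℕ → Ω → (Fin d → ℝ)) (hx : ∀ k, Measurable (x k)) :
    (IsReciprocal μ N x hx ↔
      (IsCMOn μ x hx 0 N N ∧ ∀ k1 : ℕ, k1 ≤ N - 2 → IsCMOn μ x hx k1 N k1)) ∧
    (IsReciprocal μ N x hx ↔
      (IsCMOn μ x hx 0 N 0 ∧ ∀ k2 : ℕ, 2 ≤ k2 → k2 ≤ N → IsCMOn μ x hx 0 k2 k2)) := by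
  set m : ℕ → MeasurableSpace Ω := fun i => MeasurableSpace.comap (x i) inferInstance
  have hm : ∀ i, m i ≤ (inferInstance : MeasurableSpace Ω) := fun i => (hx i).comap_le
  have trCM : ∀ k1 k2 c : ℕ, IsCMOn μ x hx k1 k2 c ↔
      (∀ j k : ℕ, k1 ≤ j → j < k → k ≤ k2 →
        CondIndep (m j ⊔ m c) (m k) (MSup m (Set.Ico k1 j))
          (sup_le (hm j) (hm c)) μ) := by
    intro k1 k2 c
    have base : ∀ j k : ℕ,
        CondIndepFun (MeasurableSpace.comap (fun ω => (x j ω, x c ω)) inferInstance)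
          (measurable_iff_comap_le.mp ((hx j).prodMk (hx c)))
          (x k) (fun ω (i : Set.Ico k1 j) => x (i : ℕ) ω) μ ↔
        CondIndep (m j ⊔ m c) (m k) (MSup m (Set.Ico k1 j))
          (sup_le (hm j) (hm c)) μ :=
      fun j k => (condIndepFun_iff_condIndep _ _ _ _ μ).trans
        (condIndep_congr' (comap_prodmk _ _) rfl (comap_pi_family x _))
    exact ⟨fun H j k h1 h2 h3 => (base j k).mp (H j k h1 h2 h3),
      fun H j k h1 h2 h3 => (base j k).mpr (H j k h1 h2 h3)⟩
  have trRec : IsReciprocal μ N x hx ↔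
      (∀ j k l : ℕ, j < k → k < l → l ≤ N →
        CondIndep (m j ⊔ m l) (m k) (MSup m {i | i < j ∨ (l < i ∧ i ≤ N)})
          (sup_le (hm j) (hm l)) μ) := by
    have base : ∀ j k l : ℕ,
        CondIndepFun (MeasurableSpace.comap (fun ω => (x j ω, x l ω)) inferInstance)
          (measurable_iff_comap_le.mp ((hx j).prodMk (hx l)))
          (x k) (fun ω (i : {i : ℕ // i < j ∨ (l < i ∧ i ≤ N)}) => x (i : ℕ) ω) μ ↔
        CondIndep (m j ⊔ m l) (m k) (MSup m {i | i < j ∨ (l < i ∧ i ≤ N)})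
          (sup_le (hm j) (hm l)) μ :=
      fun j k l => (condIndepFun_iff_condIndep _ _ _ _ μ).trans
        (condIndep_congr' (comap_prodmk _ _) rfl (comap_pi_family x _))
    exact ⟨fun H j k l h1 h2 h3 => (base j k l).mp (H j k l h1 h2 h3),
      fun H j k l h1 h2 h3 => (base j k l).mpr (H j k l h1 h2 h3)⟩
  simp only [trCM, trRec]
  constructor
  · -- part (i)
    constructor
    · -- reciprocal ⇒ (CM_L and all [k1,N]-CM_F)
      intro R
      refine ⟨?_, ?_⟩
      · intro j k _ hjk hkN
        rcases hkN.lt_or_eq with hkN' | rfl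
        · have h := R j k N hjk hkN' (le_refl N)
          refine condIndep_transport h rfl rfl ?_ _
          congr 1
          ext i
          simp only [Set.mem_setOf_eq, Set.mem_Ico]
          omega
        · exact condIndep_of_le_left _ le_sup_right (MSup_le hm)
      · intro k1 _ j k hk1j hjk hkN
        exact reciprocal_to_CMF hm N R k1 j k hk1j hjk hkN
    · -- (CM_L and all [k1,N]-CM_F) ⇒ reciprocal
      rintro ⟨hL, hF⟩ j k l hjk hkl hlN
      have hjN2 : j ≤ N - 2 := by omega
      have hjN : j ≤ N := by omega
      have hkN : k ≤ N := by omega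
      -- (1) : x k ⟂ x_{(l,N]} | (x j, x l)
      have B := markov_joint hm (hm j) j N (hF j hjN2) l N
        (by omega) hlN (le_refl N)
      have h1 : CondIndep (m l ⊔ m j) (m k) (MSup m (Set.Ioc l N))
          (sup_le (hm l) (hm j)) μ :=
        condIndep_of_condIndep_of_le_left B
          (le_MSup m (⟨le_of_lt hjk, hkl⟩ : k ∈ Set.Ico j l))
      have h1' := condIndep_transport h1 (sup_comm _ _) rfl rfl
        (sup_le (hm j) (hm l))
      -- (2) : x k ⟂ x_{[0,j)} | (x j, x l, x_{(l,N]})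
      have A := markov_joint hm (hm N) 0 N hL j N (Nat.zero_le j) hjN (le_refl N)
      have hred : m k ⊔ MSup m (Set.Icc l N) ≤ MSup m (Set.Ioc j N) :=
        sup_le (le_MSup m (⟨hjk, hkN⟩ : k ∈ Set.Ioc j N))
          (MSup_mono fun i hi => ⟨lt_of_lt_of_le (hjk.trans hkl) hi.1, hi.2⟩)
      have h2a := condIndep_of_condIndep_of_le_right A hred
      have h2b := CondIndep.weakUnion (sup_le (hm j) (hm N)) (MSup_le hm)
        (hm k) (MSup_le hm) h2a
      have eIcc : MSup m (Set.Icc l N) = m l ⊔ MSup m (Set.Ioc l N) := by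
        rw [← MSup_insert]
        congr 1
        ext i
        simp only [Set.mem_insert_iff, Set.mem_Icc, Set.mem_Ioc]
        omega
      have e2 : (m j ⊔ m N) ⊔ MSup m (Set.Icc l N)
          = (m j ⊔ m l) ⊔ MSup m (Set.Ioc l N) := by
        rw [sup_assoc, sup_eq_right.mpr
          (le_MSup m (⟨hlN, le_refl N⟩ : N ∈ Set.Icc l N)), eIcc, ← sup_assoc]
      have h2c := condIndep_transport h2b e2 rfl rfl
        (sup_le (sup_le (hm j) (hm l)) (MSup_le hm))
      have h2 := h2c.symm
      have hc := CondIndep.contraction (sup_le (hm j) (hm l)) (hm k)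
        (MSup_le hm) (MSup_le hm) h1' h2
      refine condIndep_transport hc rfl rfl ?_ _
      rw [← MSup_union]
      congr 1
      ext i
      simp only [Set.mem_union, Set.mem_Ioc, Set.mem_Ico, Set.mem_setOf_eq]
      omega
  · -- part (ii)
    constructor
    · -- reciprocal ⇒ (CM_F and all [0,k2]-CM_L)
      intro R
      refine ⟨?_, ?_⟩
      · intro j k _ hjk hkN
        exact reciprocal_to_CMF hm N R 0 j k (Nat.zero_le j) hjk hkN
      · intro k2 _ hk2N j k _ hjk hkk2
        rcases hkk2.lt_or_eq with hlt | rfl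
        · exact condIndep_of_condIndep_of_le_right (R j k k2 hjk hlt hk2N)
            (MSup_mono fun i hi => Or.inl hi.2)
        · exact condIndep_of_le_left _ le_sup_right (MSup_le hm)
    · -- (CM_F and all [0,k2]-CM_L) ⇒ reciprocal
      rintro ⟨hF0, hL2⟩ j k l hjk hkl hlN
      have hl2 : 2 ≤ l := by omega
      -- (1') : x k ⟂ x_{[0,j)} | (x j, x l)
      have B := markov_joint hm (hm l) 0 l (hL2 l hl2 hlN) j l
        (Nat.zero_le j) (by omega) (le_refl l)
      have h1' : CondIndep (m j ⊔ m l) (m k) (MSup m (Set.Ico 0 j))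
          (sup_le (hm j) (hm l)) μ :=
        (condIndep_of_condIndep_of_le_right B
          (le_MSup m (⟨hjk, le_of_lt hkl⟩ : k ∈ Set.Ioc j l))).symm
      -- (2') : x k ⟂ x_{(l,N]} | (x j, x l, x_{[0,j)})
      have A := markov_joint hm (hm 0) 0 N hF0 l N (Nat.zero_le l) hlN (le_refl N)
      have hred : MSup m (Set.Icc 0 j) ⊔ m k ≤ MSup m (Set.Ico 0 l) :=
        sup_le (MSup_mono fun i hi =>
            ⟨Nat.zero_le i, lt_of_le_of_lt hi.2 (hjk.trans hkl)⟩)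
          (le_MSup m (⟨Nat.zero_le k, hkl⟩ : k ∈ Set.Ico 0 l))
      have h2a := condIndep_of_condIndep_of_le_left A hred
      have h2b := h2a.symm
      have h2c := condIndep_transport h2b rfl rfl (sup_comm _ _)
        (sup_le (hm l) (hm 0))
      have h2d := CondIndep.weakUnion (sup_le (hm l) (hm 0)) (MSup_le hm)
        (hm k) (MSup_le hm) h2c
      have eIcc : MSup m (Set.Icc 0 j) = m j ⊔ MSup m (Set.Ico 0 j) := by
        rw [← MSup_insert]
        congr 1
        ext i
        simp only [Set.mem_insert_iff, Set.mem_Icc, Set.mem_Ico]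
        omega
      have e2 : (m l ⊔ m 0) ⊔ MSup m (Set.Icc 0 j)
          = (m j ⊔ m l) ⊔ MSup m (Set.Ico 0 j) := by
        rw [sup_assoc, sup_eq_right.mpr
          (le_MSup m (⟨le_refl 0, Nat.zero_le j⟩ : (0:ℕ) ∈ Set.Icc 0 j)),
          eIcc, ← sup_assoc, sup_comm (m l) (m j)]
      have h2e := condIndep_transport h2d e2 rfl rfl
        (sup_le (sup_le (hm j) (hm l)) (MSup_le hm))
      have h2 := h2e.symm
      have hc := CondIndep.contraction (sup_le (hm j) (hm l)) (hm k)
        (MSup_le hm) (MSup_le hm) h1' h2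
      refine condIndep_transport hc rfl rfl ?_ _
      rw [← MSup_union]
      congr 1
      ext i
      simp only [Set.mem_union, Set.mem_Ico, Set.mem_Ioc, Set.mem_setOf_eq]
      omega
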